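/- Hopcroft–Karp length bound: let M be a matching in a graph G such that every M-augmenting path has length at least 2k - 1 (for some k ≥ 1), and let M* be a maximum matching. Then |M*| - |M| ≤ |V(G)| / (2k). Consequently, if shortest augmenting paths have length at least √n, the matching is within √n of maximum. -/

import Mathlib

open SimpleGraph

variable {V : Type*}

/-- `M` is a matching in the simple graph `G`: a set of edges of `G` that are
pairwise vertex-disjoint. -/
def IsMatchingSet (G : SimpleGraph V) (M : Set (Sym2 V)) : Prop :=
  M ⊆ G.edgeSet ∧ ∀ v : V, {e | e ∈ M ∧ v ∈ e}.Subsingleton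

/-- A vertex is free (unmatched) if no matching edge contains it. -/
def Unmatched (M : Set (Sym2 V)) (v : V) : Prop :=
  ∀ e ∈ M, v ∉ e

/-- A walk is alternating w.r.t. `M` if its edges alternate non-matching /
matching, starting with a non-matching edge. -/
def IsAlternating (G : SimpleGraph V) (M : Set (Sym2 V)) {u v : V} (p : G.Walk u v) : Prop :=
  ∀ (i : ℕ) (h : i < p.edges.length), (p.edges.get ⟨i, h⟩ ∈ M ↔ Odd i)

/-- An `M`-augmenting path: a simple path of odd length, alternating starting
(and hence ending) with non-matching edges, whose two endpoints are free. -/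
def IsAugPath (G : SimpleGraph V) (M : Set (Sym2 V)) {u v : V} (p : G.Walk u v) : Prop :=
  p.IsPath ∧ Odd p.length ∧ IsAlternating G M p ∧ Unmatched M u ∧ Unmatched M v

/-- Length of a shortest even-length alternating simple path from a free vertex to `v`. -/
noncomputable def Lcp (G : SimpleGraph V) (M : Set (Sym2 V)) (v : V) : ℕ∞ :=
  sInf {n : ℕ∞ | ∃ (f : V) (p : G.Walk f v), Unmatched M f ∧ p.IsPath ∧
    IsAlternating G M p ∧ Even p.length ∧ (p.length : ℕ∞) = n}

/-- Length of a shortest odd-length alternating simple path from a free vertex to `v`. -/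
noncomputable def LcpOdd (G : SimpleGraph V) (M : Set (Sym2 V)) (v : V) : ℕ∞ :=
  sInf {n : ℕ∞ | ∃ (f : V) (p : G.Walk f v), Unmatched M f ∧ p.IsPath ∧
    IsAlternating G M p ∧ Odd p.length ∧ (p.length : ℕ∞) = n}


section Aux
open scoped Classical
open Walk

variable {G : SimpleGraph V} {A B : Set (Sym2 V)}


/-- Alternation predicate on edge lists: if `b` then next edge must lie in `A \ B`,
otherwise in `B \ A`; flags alternate. -/
def AltL (A B : Set (Sym2 V)) : Bool → List (Sym2 V) → Prop
  | _, [] => True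
  | b, e :: l => e ∈ (if b then A \ B else B \ A) ∧ AltL A B (!b) l

@[simp] lemma altL_nil {b : Bool} : AltL A B b [] := trivial

lemma altL_cons {b : Bool} {e : Sym2 V} {l : List (Sym2 V)} :
    AltL A B b (e :: l) ↔ e ∈ (if b then A \ B else B \ A) ∧ AltL A B (!b) l := Iff.rfl

lemma altL_get {l : List (Sym2 V)} : ∀ {b : Bool}, AltL A B b l →
    ∀ (i : ℕ) (hi : i < l.length), (l.get ⟨i, hi⟩ ∈ A ↔ (Odd i ↔ b = false)) := by
  induction l with
  | nil => intro b _ i hi; simp at hi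
  | cons e t ih =>
    intro b h i hi
    obtain ⟨he, ht⟩ := altL_cons.mp h
    cases i with
    | zero =>
      simp only [List.get]
      cases b with
      | true =>
        simp only [if_true] at he
        simp [he.1, Nat.odd_iff]
      | false =>
        simp only [Bool.false_eq_true, if_false] at he
        simpa using he.2
    | succ i =>
      have := ih ht i (by simpa using hi)
      simp only [List.get_cons_succ] at *
      cases b <;> simp_all [Nat.odd_add_one, Nat.not_even_iff_odd] 

lemma altL_side {l : List (Sym2 V)} : ∀ {b : Bool}, AltL A B b l →
    ∀ e ∈ l, (e ∈ A ∧ e ∉ B) ∨ (e ∈ B ∧ e ∉ A) := by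
  induction l with
  | nil => intro b _ e he; simp at he
  | cons f t ih =>
    intro b h e he
    obtain ⟨hf, ht⟩ := altL_cons.mp h
    rcases List.mem_cons.mp he with rfl | he'
    · cases b with
      | true => simp only [if_true] at hf; exact Or.inl ⟨hf.1, hf.2⟩
      | false => simp only [Bool.false_eq_true, if_false] at hf; exact Or.inr ⟨hf.1, hf.2⟩
    · exact ih ht e he'




lemma cover_B : ∀ {u v : V} (p : G.Walk u v) (b : Bool), AltL A B b p.edges →
    ∀ x ∈ p.support, x ≠ v → (b = true → x ≠ u) → ∃ e ∈ p.edges, e ∈ B ∧ x ∈ e := by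
  intro u v p
  induction p with
  | nil => intro b _ x hx hxv _; simp at hx; exact absurd hx hxv
  | @cons u w v hadj q ih =>
    intro b hAlt x hx hxv hxu
    rw [Walk.edges_cons, altL_cons] at hAlt
    obtain ⟨he, hq⟩ := hAlt
    rw [Walk.support_cons, List.mem_cons] at hx
    cases b with
    | false =>
      simp only [Bool.false_eq_true, if_false] at he
      rcases hx with rfl | hx'
      · exact ⟨s(x, w), by simp, he.1, Sym2.mem_mk_left _ _⟩
      · by_cases hxw : x = w
        · subst hxw; exact ⟨s(u, x), by simp, he.1, Sym2.mem_mk_right _ _⟩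
        · obtain ⟨e, hel, heB', hxe⟩ := ih true hq x hx' hxv (fun _ => hxw)
          exact ⟨e, by simp [hel], heB', hxe⟩
    | true =>
      rcases hx with rfl | hx'
      · exact absurd rfl (hxu rfl)
      · obtain ⟨e, hel, heB', hxe⟩ := ih false hq x hx' hxv (by simp)
        exact ⟨e, by simp [hel], heB', hxe⟩

lemma cover_A : ∀ {u v : V} (p : G.Walk u v) (b : Bool), AltL A B b p.edges →
    ∀ x ∈ p.support, x ≠ v → (b = false → x ≠ u) → ∃ e ∈ p.edges, e ∈ A ∧ x ∈ e := by
  intro u v p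
  induction p with
  | nil => intro b _ x hx hxv _; simp at hx; exact absurd hx hxv
  | @cons u w v hadj q ih =>
    intro b hAlt x hx hxv hxu
    rw [Walk.edges_cons, altL_cons] at hAlt
    obtain ⟨he, hq⟩ := hAlt
    rw [Walk.support_cons, List.mem_cons] at hx
    cases b with
    | true =>
      simp only [if_true] at he
      rcases hx with rfl | hx'
      · exact ⟨s(x, w), by simp, he.1, Sym2.mem_mk_left _ _⟩
      · by_cases hxw : x = w
        · subst hxw; exact ⟨s(u, x), by simp, he.1, Sym2.mem_mk_right _ _⟩
        · obtain ⟨e, hel, heA', hxe⟩ := ih false hq x hx' hxv (fun _ => hxw)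
          exact ⟨e, by simp [hel], heA', hxe⟩
    | false =>
      rcases hx with rfl | hx'
      · exact absurd rfl (hxu rfl)
      · obtain ⟨e, hel, heA', hxe⟩ := ih true hq x hx' hxv (by simp)
        exact ⟨e, by simp [hel], heA', hxe⟩

lemma coverEnd_B : ∀ {u v : V} (p : G.Walk u v) (b : Bool), AltL A B b p.edges →
    0 < p.length → (Odd p.length ↔ b = false) → ∃ e ∈ p.edges, e ∈ B ∧ v ∈ e := by
  intro u v p
  induction p with
  | nil => intro b _ h0 _; simp at h0
  | @cons u w v hadj q ih =>
    intro b hAlt _ hpar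
    rw [Walk.edges_cons, altL_cons] at hAlt
    obtain ⟨he, hq⟩ := hAlt
    rw [Walk.length_cons] at hpar
    by_cases h0 : q.length = 0
    · have hwv : w = v := Walk.eq_of_length_eq_zero h0
      subst hwv
      have hb : b = false := by
        rw [h0] at hpar
        simpa using hpar
      subst hb
      simp only [Bool.false_eq_true, if_false] at he
      exact ⟨s(u, w), by simp, he.1, Sym2.mem_mk_right _ _⟩
    · have hpar' : Odd q.length ↔ (!b) = false := by
        simp only [Nat.odd_iff] at hpar ⊢
        cases b <;> simp_all <;> omega
      obtain ⟨e, hel, hB, hv⟩ := ih (!b) hq (Nat.pos_of_ne_zero h0) hpar'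
      exact ⟨e, by simp [hel], hB, hv⟩

lemma coverEnd_A : ∀ {u v : V} (p : G.Walk u v) (b : Bool), AltL A B b p.edges →
    0 < p.length → (Odd p.length ↔ b = true) → ∃ e ∈ p.edges, e ∈ A ∧ v ∈ e := by
  intro u v p
  induction p with
  | nil => intro b _ h0 _; simp at h0
  | @cons u w v hadj q ih =>
    intro b hAlt _ hpar
    rw [Walk.edges_cons, altL_cons] at hAlt
    obtain ⟨he, hq⟩ := hAlt
    rw [Walk.length_cons] at hpar
    by_cases h0 : q.length = 0
    · have hwv : w = v := Walk.eq_of_length_eq_zero h0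
      subst hwv
      have hb : b = true := by
        rw [h0] at hpar
        simpa using hpar
      subst hb
      simp only [if_true] at he
      exact ⟨s(u, w), by simp, he.1, Sym2.mem_mk_right _ _⟩
    · have hpar' : Odd q.length ↔ (!b) = true := by
        simp only [Nat.odd_iff] at hpar ⊢
        cases b <;> simp_all <;> omega
      obtain ⟨e, hel, hB, hv⟩ := ih (!b) hq (Nat.pos_of_ne_zero h0) hpar'
      exact ⟨e, by simp [hel], hB, hv⟩

lemma notEnd_B : ∀ {u v : V} (p : G.Walk u v) (b : Bool), AltL A B b p.edges →
    p.IsPath → (Odd p.length ↔ b = true) → ∀ e ∈ p.edges, e ∈ B → v ∉ e := by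
  intro u v p
  induction p with
  | nil => intro b _ _ _ e he; simp at he
  | @cons u w v hadj q ih =>
    intro b hAlt hp hpar e he heB hve
    rw [Walk.edges_cons, altL_cons] at hAlt
    obtain ⟨hfirst, hq⟩ := hAlt
    rw [Walk.cons_isPath_iff] at hp
    rw [Walk.length_cons] at hpar
    rcases List.mem_cons.mp he with rfl | he'
    · rcases Sym2.mem_iff.mp hve with rfl | rfl
      · exact hp.2 q.end_mem_support
      · have hqnil : q = Walk.nil := Walk.isPath_iff_eq_nil.mp hp.1
        have h0 : q.length = 0 := by rw [hqnil]; rfl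
        have hb : b = true := by rw [h0] at hpar; simpa using hpar
        subst hb
        simp only [if_true] at hfirst
        exact hfirst.2 heB
    · have hpar' : Odd q.length ↔ (!b) = true := by
        simp only [Nat.odd_iff] at hpar ⊢
        cases b <;> simp_all <;> omega
      exact ih (!b) hq hp.1 hpar' e he' heB hve

lemma notEnd_A : ∀ {u v : V} (p : G.Walk u v) (b : Bool), AltL A B b p.edges →
    p.IsPath → (Odd p.length ↔ b = false) → ∀ e ∈ p.edges, e ∈ A → v ∉ e := by
  intro u v p
  induction p with
  | nil => intro b _ _ _ e he; simp at he
  | @cons u w v hadj q ih =>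
    intro b hAlt hp hpar e he heA hve
    rw [Walk.edges_cons, altL_cons] at hAlt
    obtain ⟨hfirst, hq⟩ := hAlt
    rw [Walk.cons_isPath_iff] at hp
    rw [Walk.length_cons] at hpar
    rcases List.mem_cons.mp he with rfl | he'
    · cases b with
      | false =>
        simp only [Bool.false_eq_true, if_false] at hfirst
        exact hfirst.2 heA
      | true =>
        rcases Sym2.mem_iff.mp hve with rfl | rfl
        · exact hp.2 q.end_mem_support
        · have hqnil : q = Walk.nil := Walk.isPath_iff_eq_nil.mp hp.1
          have h0 : q.length = 0 := by rw [hqnil]; rfl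
          rw [h0] at hpar
          simp at hpar
    · have hpar' : Odd q.length ↔ (!b) = false := by
        simp only [Nat.odd_iff] at hpar ⊢
        cases b <;> simp_all <;> omega
      exact ih (!b) hq hp.1 hpar' e he' heA hve


lemma altL_isAlternating {u v : V} {p : G.Walk u v} (h : AltL A B false p.edges) :
    _root_.IsAlternating G A p := by
  intro i hi
  have := altL_get h i hi
  simpa using this

lemma cardA (Mf : Finset (Sym2 V)) (hMA : (Mf : Set (Sym2 V)) = A) :
    ∀ (l : List (Sym2 V)) (b : Bool), l.Nodup → AltL A B b l →
      (Mf ∩ l.toFinset).card = if b then (l.length + 1) / 2 else l.length / 2 := by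
  intro l
  induction l with
  | nil => intro b _ _; simp
  | cons e t ih =>
    intro b hnd hAlt
    obtain ⟨he, ht⟩ := altL_cons.mp hAlt
    rw [List.nodup_cons] at hnd
    rw [List.toFinset_cons]
    cases b with
    | true =>
      simp only [if_true] at he
      have heM : e ∈ Mf := by
        rw [← Finset.mem_coe, hMA]; exact he.1
      rw [Finset.inter_insert_of_mem heM,
        Finset.card_insert_of_notMem
          (fun hmem => hnd.1 (List.mem_toFinset.mp (Finset.mem_inter.mp hmem).2)),
        ih false hnd.2 ht]
      simp only [List.length_cons]
      simp
      omega
    | false =>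
      simp only [Bool.false_eq_true, if_false] at he
      have heM : e ∉ Mf := fun h => he.2 (by rw [← hMA]; exact Finset.mem_coe.mpr h)
      rw [Finset.inter_insert_of_notMem heM, ih true hnd.2 ht]
      simp


lemma cardB (Mf : Finset (Sym2 V)) (hMB : (Mf : Set (Sym2 V)) = B) :
    ∀ (l : List (Sym2 V)) (b : Bool), l.Nodup → AltL A B b l →
      (Mf ∩ l.toFinset).card = if b then l.length / 2 else (l.length + 1) / 2 := by
  intro l
  induction l with
  | nil => intro b _ _; simp
  | cons e t ih =>
    intro b hnd hAlt
    obtain ⟨he, ht⟩ := altL_cons.mp hAlt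
    rw [List.nodup_cons] at hnd
    rw [List.toFinset_cons]
    cases b with
    | false =>
      simp only [Bool.false_eq_true, if_false] at he
      have heM : e ∈ Mf := by
        rw [← Finset.mem_coe, hMB]; exact he.1
      rw [Finset.inter_insert_of_mem heM,
        Finset.card_insert_of_notMem
          (fun hmem => hnd.1 (List.mem_toFinset.mp (Finset.mem_inter.mp hmem).2)),
        ih true hnd.2 ht]
      simp only [List.length_cons]
      simp
      omega
    | true =>
      simp only [if_true] at he
      have heM : e ∉ Mf := fun h => he.2 (by rw [← hMB]; exact Finset.mem_coe.mpr h)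
      rw [Finset.inter_insert_of_notMem heM, ih false hnd.2 ht]
      simp

lemma altL_concat : ∀ (l : List (Sym2 V)) (b c : Bool), AltL A B b l →
    (c = true ↔ Odd l.length) →
    ∀ e ∈ (if (if c then !b else b) then A \ B else B \ A), AltL A B b (l ++ [e]) := by
  intro l
  induction l with
  | nil =>
    intro b c _ hc e he
    have hcf : c = false := by
      cases c
      · rfl
      · exact absurd (hc.mp rfl) (by simp)
    subst hcf
    simp only [Bool.false_eq_true, if_false] at he
    exact ⟨he, trivial⟩
  | cons f t ih =>
    intro b c hAlt hc e he
    obtain ⟨hf, ht⟩ := altL_cons.mp hAlt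
    simp only [List.length_cons, Nat.odd_iff] at hc
    refine ⟨hf, ih (!b) (!c) ht ?_ e ?_⟩
    · simp only [Nat.odd_iff]
      cases c <;> simp_all <;> omega
    · cases c <;> simp_all

lemma isPath_concat {u v w : V} {p : G.Walk u v} (hp : p.IsPath) (h : G.Adj v w)
    (hw : w ∉ p.support) : (p.concat h).IsPath := by
  rw [← Walk.isPath_reverse_iff, Walk.reverse_concat]
  exact ((Walk.isPath_reverse_iff p).mpr hp).cons
    (by rw [Walk.support_reverse]; simpa using hw)

lemma mem_support_of_mem_edge {u v x : V} {p : G.Walk u v} {e : Sym2 V}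
    (he : e ∈ p.edges) (hx : x ∈ e) : x ∈ p.support := by
  obtain ⟨y, rfl⟩ := Sym2.mem_iff_exists.mp hx
  exact Walk.fst_mem_support_of_mem_edges p he

lemma mem_edge_of_mem_support : ∀ {u v : V} (p : G.Walk u v) {x : V},
    x ∈ p.support → x = u ∨ ∃ e ∈ p.edges, x ∈ e := by
  intro u v p
  induction p with
  | nil => intro x hx; left; simpa using hx
  | @cons u w v hadj q ih =>
    intro x hx
    rw [Walk.support_cons, List.mem_cons] at hx
    rcases hx with rfl | hx'
    · exact Or.inl rfl
    · rcases ih hx' with rfl | ⟨e, hel, hxe⟩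
      · exact Or.inr ⟨s(u, x), by simp, Sym2.mem_mk_right _ _⟩
      · exact Or.inr ⟨e, by simp [hel], hxe⟩

lemma cov_card [Fintype V] (G : SimpleGraph V) (F : Finset (Sym2 V))
    (hF : IsMatchingSet G ↑F) :
    (F.biUnion (fun e => Finset.univ.filter (· ∈ e))).card = 2 * F.card := by
  rw [Finset.card_biUnion]
  · rw [Finset.sum_congr rfl (g := fun _ => 2) (fun e he => ?_), Finset.sum_const,
      smul_eq_mul, mul_comm]
    revert he
    refine Sym2.ind (fun a b he => ?_) e
    have hadj : G.Adj a b := hF.1 (Finset.mem_coe.mpr he)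
    have hab : a ≠ b := G.ne_of_adj hadj
    have : Finset.univ.filter (· ∈ s(a, b)) = {a, b} := by
      ext x; simp [Sym2.mem_iff]
    rw [this, Finset.card_insert_of_notMem (by simpa using hab), Finset.card_singleton]
  · intro e he f hf hef
    rw [Function.onFun, Finset.disjoint_left]
    intro x hxe hxf
    simp only [Finset.mem_filter] at hxe hxf
    exact hef (hF.2 x ⟨Finset.mem_coe.mpr he, hxe.2⟩ ⟨Finset.mem_coe.mpr hf, hxf.2⟩)

end Aux

section Main
open scoped Classical

lemma main_aux [Fintype V] (G : SimpleGraph V) (k : ℕ) (hk : 1 ≤ k) :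
    ∀ (n : ℕ) (S : Finset V) (M Mstar : Finset (Sym2 V)),
      S.card ≤ n →
      IsMatchingSet G ↑M → IsMatchingSet G ↑Mstar →
      (∀ e ∈ M, ∀ x ∈ (e : Sym2 V), x ∈ S) →
      (∀ e ∈ Mstar, ∀ x ∈ (e : Sym2 V), x ∈ S) →
      (∀ (u v : V) (p : G.Walk u v), IsAugPath G ↑M p → (∀ x ∈ p.support, x ∈ S) →
        2 * k - 1 ≤ p.length) →
      (Mstar.card - M.card) * (2 * k) ≤ S.card := by
  intro n
  induction n with
  | zero =>
    intro S M Mstar hSn hM hMs hMS hMsS _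
    by_cases hd : Mstar.card ≤ M.card
    · simp [Nat.sub_eq_zero_of_le hd]
    · exfalso
      push_neg at hd
      obtain ⟨e, he⟩ := Finset.card_pos.mp (by omega : 0 < Mstar.card)
      have hxS := hMsS e he e.out.1 (Sym2.out_fst_mem e)
      have hcard : 0 < S.card := Finset.card_pos.mpr ⟨_, hxS⟩
      omega
  | succ n ih =>
    intro S M Mstar hSn hM hMs hMS hMsS haug
    by_cases hd : Mstar.card ≤ M.card
    · simp [Nat.sub_eq_zero_of_le hd]
    push_neg at hd
    -- find a free vertex u matched by Mstar
    have hcov := cov_card G M hM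
    have hcovs := cov_card G Mstar hMs
    have hex : ∃ u ∈ Mstar.biUnion (fun e => Finset.univ.filter (· ∈ e)),
        u ∉ M.biUnion (fun e => Finset.univ.filter (· ∈ e)) := by
      by_contra hcon
      push_neg at hcon
      have := Finset.card_le_card (fun x hx => hcon x hx)
      omega
    obtain ⟨u, hu1, hu2⟩ := hex
    simp only [Finset.mem_biUnion, Finset.mem_filter, Finset.mem_univ, true_and, not_exists,
      not_and] at hu1 hu2
    have hfreeu : Unmatched (↑M : Set (Sym2 V)) u := fun e he => hu2 e (Finset.mem_coe.mp he)
    have huS : u ∈ S := by obtain ⟨e, heMs, hue⟩ := hu1; exact hMsS e heMs u hue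
    -- maximal alternating simple path from u
    set P : ℕ → Prop := fun L => ∃ (v : V) (p : G.Walk u v), p.IsPath ∧
      AltL (↑M) (↑Mstar) false p.edges ∧ p.length = L with hPdef
    have hP0 : P 0 := ⟨u, Walk.nil, by simp, by simp, rfl⟩
    have hPbdd : ∀ L, P L → L ≤ Fintype.card V := by
      rintro L ⟨v, p, hp, -, rfl⟩
      exact hp.length_lt.le
    set N := Nat.findGreatest P (Fintype.card V) with hNdef
    have hPN : P N := Nat.findGreatest_spec (Nat.zero_le _) hP0
    have hmaxN : ∀ (v' : V) (q : G.Walk u v'), q.IsPath →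
        AltL (↑M) (↑Mstar) false q.edges → q.length ≤ N := by
      intro v' q hq halt
      exact Nat.le_findGreatest (hPbdd _ ⟨v', q, hq, halt, rfl⟩) ⟨v', q, hq, halt, rfl⟩
    obtain ⟨v, p, hp, halt, hlenN⟩ := hPN
    -- extension helper: a maximal path cannot be extended
    have hext : ∀ (c : Bool), (c = true ↔ Odd p.length) → ∀ w, G.Adj v w → w ∉ p.support →
        s(v, w) ∈ (if c then (↑M : Set (Sym2 V)) \ ↑Mstar else (↑Mstar : Set (Sym2 V)) \ ↑M) →
        False := by
      intro c hc w hadj hw hside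
      have hq : (p.concat hadj).IsPath := isPath_concat hp hadj hw
      have halt' : AltL (↑M) (↑Mstar) false (p.concat hadj).edges := by
        rw [Walk.edges_concat, List.concat_eq_append]
        refine altL_concat p.edges false c halt ?_ _ ?_
        · rw [Walk.length_edges]; exact hc
        · cases c <;> simpa using hside
      have := hmaxN _ _ hq halt'
      rw [Walk.length_concat] at this
      omega
    -- the maximal path either is augmenting (odd case) or dead-ends (even case)
    have hcase : (Odd p.length ∧ Unmatched (↑M : Set (Sym2 V)) v) ∨
        (Even p.length ∧ 0 < p.length ∧ ∀ e ∈ (↑Mstar : Set (Sym2 V)), v ∉ e) := by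
      rcases Nat.even_or_odd p.length with heven | hodd
      · -- even length
        have hparf : (false = true ↔ Odd p.length) := by
          simp [Nat.not_odd_iff_even.mpr heven]
        have hpos : 0 < p.length := by
          by_contra h0
          push_neg at h0
          have hl0 : p.length = 0 := by omega
          have huv : u = v := Walk.eq_of_length_eq_zero hl0
          subst huv
          obtain ⟨e, heMs, hue⟩ := hu1
          have heM : e ∉ (↑M : Set (Sym2 V)) := fun h => hu2 e (Finset.mem_coe.mp h) hue
          obtain ⟨w, rfl⟩ := Sym2.mem_iff_exists.mp hue
          have hadj : G.Adj u w := hMs.1 (Finset.mem_coe.mpr heMs)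
          have hws : w ∉ p.support := by
            intro hws
            have hls : p.support.length = 1 := by rw [Walk.length_support, hl0]
            obtain ⟨c, hc⟩ := List.length_eq_one_iff.mp hls
            have h1 : u = c := by
              have := p.start_mem_support
              rw [hc] at this; simpa using this
            have h2 : w = c := by rw [hc] at hws; simpa using hws
            exact hadj.ne (h1.trans h2.symm)
          exact hext false hparf w hadj hws
            (by simp only [Bool.false_eq_true, if_false]
                exact ⟨Finset.mem_coe.mpr heMs, heM⟩)
        refine Or.inr ⟨heven, hpos, ?_⟩
        intro e heB hve
        obtain ⟨e2, he2, he2A, hve2⟩ := coverEnd_A p false halt hpos (by simpa using hparf.symm)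
        have heA : e ∉ (↑M : Set (Sym2 V)) := by
          intro heA
          have he12 : e = e2 := hM.2 v ⟨heA, hve⟩ ⟨he2A, hve2⟩
          subst he12
          exact notEnd_B p false halt hp (by simpa using hparf.symm) e he2 heB hve
        obtain ⟨w, rfl⟩ := Sym2.mem_iff_exists.mp hve
        have hadj : G.Adj v w := hMs.1 heB
        have hws : w ∉ p.support := by
          intro hws
          have hwv : w ≠ v := fun h => hadj.ne h.symm
          obtain ⟨e3, he3, he3B, hwe3⟩ := cover_B p false halt w hws hwv (by simp)
          have h13 : s(v, w) = e3 := hMs.2 w ⟨heB, Sym2.mem_mk_right _ _⟩ ⟨he3B, hwe3⟩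
          exact notEnd_B p false halt hp (by simpa using hparf.symm) e3 he3 he3B
            (h13 ▸ Sym2.mem_mk_left _ _)
        exact hext false hparf w hadj hws
          (by simp only [Bool.false_eq_true, if_false]; exact ⟨heB, heA⟩)
      · -- odd length
        have hpart : ((true : Bool) = true ↔ Odd p.length) := by simp [hodd]
        refine Or.inl ⟨hodd, ?_⟩
        intro e heM hve
        obtain ⟨e2, he2, he2B, hve2⟩ := coverEnd_B p false halt hodd.pos (by simp [hodd])
        have heB : e ∉ (↑Mstar : Set (Sym2 V)) := by
          intro heB
          have he12 : e = e2 := hMs.2 v ⟨heB, hve⟩ ⟨he2B, hve2⟩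
          subst he12
          exact notEnd_A p false halt hp (by simp [hodd]) e he2 heM hve
        obtain ⟨w, rfl⟩ := Sym2.mem_iff_exists.mp hve
        have hadj : G.Adj v w := hM.1 heM
        have hws : w ∉ p.support := by
          intro hws
          have hwv : w ≠ v := fun h => hadj.ne h.symm
          have hwu : w ≠ u := by
            rintro rfl
            exact hu2 _ (Finset.mem_coe.mp heM) (Sym2.mem_mk_right _ _)
          obtain ⟨e3, he3, he3A, hwe3⟩ := cover_A p false halt w hws hwv (fun _ => hwu)
          have h13 : s(v, w) = e3 := hM.2 w ⟨heM, Sym2.mem_mk_right _ _⟩ ⟨he3A, hwe3⟩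
          exact notEnd_A p false halt hp (by simp [hodd]) e3 he3 he3A
            (h13 ▸ Sym2.mem_mk_left _ _)
        exact hext true hpart w hadj hws (by simp only [if_true]; exact ⟨heM, heB⟩)
    -- every support vertex lies in S
    have hSup : ∀ x ∈ p.support, x ∈ S := by
      intro x hx
      rcases mem_edge_of_mem_support p hx with rfl | ⟨e, hel, hxe⟩
      · exact huS
      · rcases altL_side halt e hel with ⟨h1, -⟩ | ⟨h1, -⟩
        · exact hMS e (Finset.mem_coe.mp h1) x hxe
        · exact hMsS e (Finset.mem_coe.mp h1) x hxe
    -- matching edges touching the support are path edges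
    have hcovA : ∀ e ∈ (↑M : Set (Sym2 V)), ∀ x ∈ e, x ∈ p.support → e ∈ p.edges := by
      intro e heM x hxe hxs
      by_cases hxu : x = u
      · exact absurd hxe (hxu ▸ hfreeu e heM)
      by_cases hxv : x = v
      · subst hxv
        rcases hcase with ⟨-, hvfree⟩ | ⟨heven, hpos, -⟩
        · exact absurd hxe (hvfree e heM)
        · obtain ⟨e2, he2, he2A, hve2⟩ := coverEnd_A p false halt hpos
            (by simp [Nat.not_odd_iff_even.mpr heven])
          have h12 : e = e2 := hM.2 x ⟨heM, hxe⟩ ⟨he2A, hve2⟩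
          exact h12 ▸ he2
      · obtain ⟨e3, he3, he3A, hxe3⟩ := cover_A p false halt x hxs hxv (fun _ => hxu)
        have h13 : e = e3 := hM.2 x ⟨heM, hxe⟩ ⟨he3A, hxe3⟩
        exact h13 ▸ he3
    have hcovB : ∀ e ∈ (↑Mstar : Set (Sym2 V)), ∀ x ∈ e, x ∈ p.support → e ∈ p.edges := by
      intro e heB x hxe hxs
      by_cases hxv : x = v
      · subst hxv
        rcases hcase with ⟨hodd, -⟩ | ⟨-, -, hvB⟩
        · obtain ⟨e2, he2, he2B, hve2⟩ := coverEnd_B p false halt hodd.pos (by simp [hodd])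
          have h12 : e = e2 := hMs.2 x ⟨heB, hxe⟩ ⟨he2B, hve2⟩
          exact h12 ▸ he2
        · exact absurd hxe (hvB e heB)
      · obtain ⟨e3, he3, he3B, hxe3⟩ := cover_B p false halt x hxs hxv (by simp)
        have h13 : e = e3 := hMs.2 x ⟨heB, hxe⟩ ⟨he3B, hxe3⟩
        exact h13 ▸ he3
    -- removal
    set Ed : Finset (Sym2 V) := p.edges.toFinset with hEddef
    set Sup : Finset V := p.support.toFinset with hSupdef
    have hedN : p.edges.Nodup := hp.isTrail.edges_nodup
    have hsupN : p.support.Nodup := hp.support_nodup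
    have hSupcard : Sup.card = p.length + 1 := by
      rw [hSupdef, List.toFinset_card_of_nodup hsupN, Walk.length_support]
    have hSupS : Sup ⊆ S := fun x hx => hSup x (List.mem_toFinset.mp hx)
    have hS'card : (S \ Sup).card = S.card - (p.length + 1) := by
      rw [Finset.card_sdiff_of_subset hSupS, hSupcard]
    have hMEd : (M ∩ Ed).card = p.length / 2 := by
      have := cardA (B := (↑Mstar : Set (Sym2 V))) M rfl p.edges false hedN halt
      simpa [Walk.length_edges] using this
    have hMsEd : (Mstar ∩ Ed).card = (p.length + 1) / 2 := by
      have := cardB (A := (↑M : Set (Sym2 V))) Mstar rfl p.edges false hedN halt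
      simpa [Walk.length_edges] using this
    have hMEdle : (M ∩ Ed).card ≤ M.card := Finset.card_le_card Finset.inter_subset_left
    have hMsEdle : (Mstar ∩ Ed).card ≤ Mstar.card := Finset.card_le_card Finset.inter_subset_left
    have hM'card : (M \ Ed).card = M.card - p.length / 2 := by
      have := Finset.card_inter_add_card_sdiff M Ed
      omega
    have hMs'card : (Mstar \ Ed).card = Mstar.card - (p.length + 1) / 2 := by
      have := Finset.card_inter_add_card_sdiff Mstar Ed
      omega
    -- hypotheses for the induction
    have hsubM : (↑(M \ Ed) : Set (Sym2 V)) ⊆ ↑M := by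
      rw [Finset.coe_sdiff]; exact Set.diff_subset
    have hsubMs : (↑(Mstar \ Ed) : Set (Sym2 V)) ⊆ ↑Mstar := by
      rw [Finset.coe_sdiff]; exact Set.diff_subset
    have hM' : IsMatchingSet G ↑(M \ Ed) :=
      ⟨Set.Subset.trans hsubM hM.1, fun x => (hM.2 x).anti (fun e he => ⟨hsubM he.1, he.2⟩)⟩
    have hMs' : IsMatchingSet G ↑(Mstar \ Ed) :=
      ⟨Set.Subset.trans hsubMs hMs.1, fun x => (hMs.2 x).anti (fun e he => ⟨hsubMs he.1, he.2⟩)⟩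
    have hconfM' : ∀ e ∈ M \ Ed, ∀ x ∈ (e : Sym2 V), x ∈ S \ Sup := by
      intro e he x hxe
      rw [Finset.mem_sdiff] at he
      rw [Finset.mem_sdiff]
      refine ⟨hMS e he.1 x hxe, fun hxSup => ?_⟩
      exact he.2 (List.mem_toFinset.mpr
        (hcovA e (Finset.mem_coe.mpr he.1) x hxe (List.mem_toFinset.mp hxSup)))
    have hconfMs' : ∀ e ∈ Mstar \ Ed, ∀ x ∈ (e : Sym2 V), x ∈ S \ Sup := by
      intro e he x hxe
      rw [Finset.mem_sdiff] at he
      rw [Finset.mem_sdiff]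
      refine ⟨hMsS e he.1 x hxe, fun hxSup => ?_⟩
      exact he.2 (List.mem_toFinset.mpr
        (hcovB e (Finset.mem_coe.mpr he.1) x hxe (List.mem_toFinset.mp hxSup)))
    have haug' : ∀ (u' v' : V) (q : G.Walk u' v'), IsAugPath G ↑(M \ Ed) q →
        (∀ x ∈ q.support, x ∈ S \ Sup) → 2 * k - 1 ≤ q.length := by
      intro u' v' q hq hqS
      obtain ⟨hqp, hqodd, hqalt, hqu, hqv⟩ := hq
      have hqedges : ∀ e ∈ q.edges, e ∉ Ed := by
        intro e hel heEd
        have hxq : e.out.1 ∈ q.support := mem_support_of_mem_edge hel (Sym2.out_fst_mem e)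
        have hxp : e.out.1 ∈ p.support :=
          mem_support_of_mem_edge (List.mem_toFinset.mp heEd) (Sym2.out_fst_mem e)
        exact (Finset.mem_sdiff.mp (hqS _ hxq)).2 (List.mem_toFinset.mpr hxp)
      have hAug : IsAugPath G ↑M q := by
        refine ⟨hqp, hqodd, ?_, ?_, ?_⟩
        · intro i hi
          have hmem : q.edges.get ⟨i, hi⟩ ∈ q.edges := q.edges.get_mem _
          have := hqalt i hi
          rw [show ((q.edges.get ⟨i, hi⟩ ∈ (↑(M \ Ed) : Set (Sym2 V))) ↔
              (q.edges.get ⟨i, hi⟩ ∈ (↑M : Set (Sym2 V)))) from ?_] at this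
          · exact this
          · rw [Finset.coe_sdiff]
            exact ⟨fun h => h.1, fun h => ⟨h, by simpa using hqedges _ hmem⟩⟩
        · intro e heM hue
          by_cases heEd : e ∈ Ed
          · have hup : u' ∈ p.support :=
              mem_support_of_mem_edge (List.mem_toFinset.mp heEd) hue
            exact (Finset.mem_sdiff.mp (hqS u' q.start_mem_support)).2
              (List.mem_toFinset.mpr hup)
          · exact hqu e (by rw [Finset.coe_sdiff]; exact ⟨heM, by simpa using heEd⟩) hue
        · intro e heM hve
          by_cases heEd : e ∈ Ed
          · have hvp : v' ∈ p.support :=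
              mem_support_of_mem_edge (List.mem_toFinset.mp heEd) hve
            exact (Finset.mem_sdiff.mp (hqS v' q.end_mem_support)).2
              (List.mem_toFinset.mpr hvp)
          · exact hqv e (by rw [Finset.coe_sdiff]; exact ⟨heM, by simpa using heEd⟩) hve
      exact haug u' v' q hAug (fun x hx => (Finset.mem_sdiff.mp (hqS x hx)).1)
    have hSupcardS : Sup.card ≤ S.card := Finset.card_le_card hSupS
    have hS'n : (S \ Sup).card ≤ n := by omega
    have hih := ih (S \ Sup) (M \ Ed) (Mstar \ Ed) hS'n hM' hMs' hconfM' hconfMs' haug'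
    -- final arithmetic
    rcases hcase with ⟨hodd, hvfree⟩ | ⟨heven, hpos, hvB⟩
    · -- augmenting path: apply the length hypothesis
      have hAugp : IsAugPath G ↑M p := ⟨hp, hodd, altL_isAlternating halt, hfreeu, hvfree⟩
      have hlb := haug u v p hAugp hSup
      obtain ⟨m, hm⟩ := hodd
      obtain ⟨d', hd'⟩ : ∃ d', Mstar.card - M.card = d' + 1 := ⟨Mstar.card - M.card - 1, by omega⟩
      have e1 : (Mstar \ Ed).card - (M \ Ed).card = d' := by omega
      rw [e1] at hih
      rw [hd', add_mul, one_mul]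
      generalize hX : d' * (2 * k) = X at hih ⊢
      omega
    · obtain ⟨m, hm⟩ := heven
      have e1 : (Mstar \ Ed).card - (M \ Ed).card = Mstar.card - M.card := by omega
      rw [e1] at hih
      exact le_trans hih (Finset.card_le_card Finset.sdiff_subset)

end Main

/-- Hopcroft–Karp length bound: if every `M`-augmenting path has length
at least `2k - 1` (`k ≥ 1`) and `M*` is a maximum matching, then
`|M*| - |M| ≤ n / (2k)`. -/
theorem hopcroft_karp_bound [Fintype V] (G : SimpleGraph V)
    (M Mstar : Finset (Sym2 V)) (hM : IsMatchingSet G ↑M)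
    (hMstar : IsMatchingSet G ↑Mstar)
    (hmax : ∀ N : Finset (Sym2 V), IsMatchingSet G ↑N → N.card ≤ Mstar.card)
    (k : ℕ) (hk : 1 ≤ k)
    (haug : ∀ (u v : V) (p : G.Walk u v), IsAugPath G ↑M p → 2 * k - 1 ≤ p.length) :
    Mstar.card - M.card ≤ Fintype.card V / (2 * k) := by
  rw [Nat.le_div_iff_mul_le (by omega : 0 < 2 * k)]
  exact main_aux G k hk (Fintype.card V) Finset.univ M Mstar (le_of_eq Finset.card_univ)
    hM hMstar (by simp) (by simp) (fun u v p hp _ => haug u v p hp)
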